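/- Let A, C ∈ ℝ^{n×n}, B, D ∈ ℝ^{n×m}, L ∈ ℝ^{m×n}, let Q ∈ ℝ^{n×n} and R ∈ ℝ^{m×m} be symmetric positive definite, let W ∈ ℝ^{n×n} be symmetric positive semidefinite, and let γ ∈ [0,1). Assume ρ(M_L) < 1, where M_L = (A+BL)⊗(A+BL) + (C+DL)⊗(C+DL). Let P be a symmetric positive definite solution of the discounted stochastic Lyapunov equation P = γ(A+BL)ᵀP(A+BL) + γ(C+DL)ᵀP(C+DL) + LᵀRL + Q. For any symmetric positive semidefinite m₀ define the second-moment sequence m_{k+1} = (A+BL) m_k (A+BL)ᵀ + (C+DL) m_k (C+DL)ᵀ + W. Then the series Σ_{k=0}^{∞} γ^k · tr((Q + LᵀRL) m_k) converges, and its sum equals tr(P m₀) + (γ/(1−γ)) · tr(P W). -/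

import Mathlib

open Matrix Kronecker

/-- The spectral radius of a real square matrix: the maximum modulus of its
complex eigenvalues. -/
noncomputable def specRad {ι : Type*} [Fintype ι] [DecidableEq ι]
    (M : Matrix ι ι ℝ) : ℝ :=
  sSup ((fun μ : ℂ => ‖μ‖) '' spectrum ℂ (M.map Complex.ofReal))

/-- The second-moment sequence `m_{k+1} = Acl m_k Aclᵀ + Ccl m_k Cclᵀ + W`. -/
noncomputable def momSeq {n : ℕ} (Acl Ccl W m0 : Matrix (Fin n) (Fin n) ℝ) :
    ℕ → Matrix (Fin n) (Fin n) ℝ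
  | 0 => m0
  | k + 1 => Acl * momSeq Acl Ccl W m0 k * Aclᵀ + Ccl * momSeq Acl Ccl W m0 k * Cclᵀ + W


open Filter Topology


section helpers
variable {n : ℕ}

lemma posSemidef_exists_ctms {X : Matrix (Fin n) (Fin n) ℝ} (hX : X.PosSemidef) :
    ∃ B : Matrix (Fin n) (Fin n) ℝ, X = Bᴴ * B := by
  open scoped MatrixOrder in
  obtain ⟨B, hB⟩ := CStarAlgebra.nonneg_iff_eq_star_mul_self.mp hX.nonneg
  exact ⟨B, hB⟩

lemma trace_ctms_nonneg (B : Matrix (Fin n) (Fin n) ℝ) : 0 ≤ (Bᴴ * B).trace := by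
  simp only [Matrix.trace, Matrix.diag, Matrix.mul_apply, Matrix.conjTranspose_apply,
    star_trivial]
  exact Finset.sum_nonneg fun i _ => Finset.sum_nonneg fun j _ => mul_self_nonneg _

lemma trace_mul_psd_nonneg {X Y : Matrix (Fin n) (Fin n) ℝ}
    (hX : X.PosSemidef) (hY : Y.PosSemidef) : 0 ≤ (X * Y).trace := by
  obtain ⟨B, hB⟩ := posSemidef_exists_ctms hX
  obtain ⟨Cc, hC⟩ := posSemidef_exists_ctms hY
  have h : (X * Y).trace = ((B * Ccᴴ)ᴴ * (B * Ccᴴ)).trace := by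
    rw [hB, hC, Matrix.conjTranspose_mul, Matrix.conjTranspose_conjTranspose]
    calc (Bᴴ * B * (Ccᴴ * Cc)).trace = ((Bᴴ * (B * Ccᴴ)) * Cc).trace := by
          simp only [Matrix.mul_assoc]
      _ = (Cc * (Bᴴ * (B * Ccᴴ))).trace := Matrix.trace_mul_comm _ _
      _ = (Cc * Bᴴ * (B * Ccᴴ)).trace := by simp only [Matrix.mul_assoc]
  rw [h]; exact trace_ctms_nonneg _

lemma trace_mul_mono {X M N : Matrix (Fin n) (Fin n) ℝ} (hX : X.PosSemidef)
    (h : (N - M).PosSemidef) : (M * X).trace ≤ (N * X).trace := by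
  have := trace_mul_psd_nonneg h hX
  rw [Matrix.sub_mul, Matrix.trace_sub] at this
  linarith

lemma quad_le_trace {P : Matrix (Fin n) (Fin n) ℝ} (hP : P.PosSemidef) (x : Fin n → ℝ) :
    x ⬝ᵥ (P *ᵥ x) ≤ P.trace * (x ⬝ᵥ x) := by
  obtain ⟨B, hB⟩ := posSemidef_exists_ctms hP
  have h1 : x ⬝ᵥ (P *ᵥ x) = (B *ᵥ x) ⬝ᵥ (B *ᵥ x) := by
    rw [hB, ← Matrix.mulVec_mulVec, Matrix.dotProduct_mulVec,
      Matrix.conjTranspose_eq_transpose_of_trivial, Matrix.vecMul_transpose]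
  have h2 : P.trace = ∑ i, ∑ j, B i j * B i j := by
    rw [hB]
    simp only [Matrix.trace, Matrix.diag, Matrix.mul_apply, Matrix.conjTranspose_apply,
      star_trivial]
    exact Finset.sum_comm
  rw [h1, h2, Finset.sum_mul]
  simp only [dotProduct, Matrix.mulVec, dotProduct]
  refine Finset.sum_le_sum fun i _ => ?_
  have := Finset.sum_mul_sq_le_sq_mul_sq Finset.univ (fun j => B i j) (fun j => x j)
  calc (∑ j, B i j * x j) * (∑ j, B i j * x j) = (∑ j, B i j * x j) ^ 2 := by ring
    _ ≤ (∑ j, (B i j) ^ 2) * (∑ j, (x j) ^ 2) := this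
    _ = (∑ j, B i j * B i j) * (∑ j, x j * x j) := by simp [sq]

lemma trace_smul_one_sub_psd {P : Matrix (Fin n) (Fin n) ℝ} (hP : P.PosSemidef) :
    (P.trace • (1 : Matrix (Fin n) (Fin n) ℝ) - P).PosSemidef := by
  refine Matrix.PosSemidef.of_dotProduct_mulVec_nonneg ?_ ?_
  · have hsym := hP.1
    rw [Matrix.IsHermitian, Matrix.conjTranspose_eq_transpose_of_trivial] at hsym
    simp [Matrix.IsHermitian, Matrix.conjTranspose_sub, Matrix.conjTranspose_smul, hsym]
  · intro x
    have key := quad_le_trace hP x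
    simp only [Matrix.sub_mulVec, Matrix.smul_mulVec, Matrix.one_mulVec,
      dotProduct_sub, dotProduct_smul, star_trivial, smul_eq_mul]
    linarith

end helpers


lemma psd_smul_nonneg {n : ℕ} {P : Matrix (Fin n) (Fin n) ℝ} (hP : P.PosSemidef)
    {c : ℝ} (hc : 0 ≤ c) : (c • P).PosSemidef := by
  refine Matrix.PosSemidef.of_dotProduct_mulVec_nonneg ?_ ?_
  · have hsym := hP.1
    simp only [Matrix.IsHermitian, Matrix.conjTranspose_smul, star_trivial, hsym.eq]
  · intro x
    have := hP.dotProduct_mulVec_nonneg x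
    simp only [Matrix.smul_mulVec, dotProduct_smul, star_trivial,
      smul_eq_mul] at *
    positivity

lemma posdef_trace_pos {n : ℕ} [Nonempty (Fin n)] {P : Matrix (Fin n) (Fin n) ℝ}
    (hP : P.PosDef) : 0 < P.trace := by
  have hdiag : ∀ i, 0 < P i i := by
    intro i
    have h := hP.dotProduct_mulVec_pos (x := Pi.single i 1) (by simp [Pi.single_eq_same, funext_iff]; exact ⟨i, by simp⟩)
    simpa [dotProduct, Matrix.mulVec, Pi.single_apply, Finset.sum_ite_eq'] using h
  exact Finset.sum_pos (fun i _ => hdiag i) Finset.univ_nonempty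

lemma exists_eps {n : ℕ} {P Q : Matrix (Fin n) (Fin n) ℝ} (hP : P.PosDef) (hQ : Q.PosDef) :
    ∃ ε : ℝ, 0 < ε ∧ ε ≤ 1 ∧ (Q - ε • P).PosSemidef := by
  rcases isEmpty_or_nonempty (Fin n) with h | h
  · refine ⟨1, one_pos, le_refl 1, ⟨?_, fun x => ?_⟩⟩
    · ext i j; exact isEmptyElim i
    · simp [Subsingleton.elim x 0]
  · set t := P.trace with ht_def
    have ht : 0 < t := posdef_trace_pos hP
    set lam := hQ.1.eigenvalues with hlam
    set c := Finset.univ.inf' Finset.univ_nonempty lam with hc_def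
    have hc : 0 < c := by
      rw [hc_def, Finset.lt_inf'_iff]
      exact fun i _ => hQ.eigenvalues_pos i
    have hQc : (Q - c • 1).PosSemidef := by
      have hU : (hQ.1.eigenvectorUnitary : Matrix (Fin n) (Fin n) ℝ) *
          star (hQ.1.eigenvectorUnitary : Matrix (Fin n) (Fin n) ℝ) = 1 :=
        Matrix.mem_unitaryGroup_iff.mp hQ.1.eigenvectorUnitary.2
      have hdiag : (diagonal (fun i => lam i - c) : Matrix (Fin n) (Fin n) ℝ) =
          diagonal (RCLike.ofReal ∘ lam) - c • 1 := by
        ext i j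
        by_cases hij : i = j <;>
          simp [hij, Matrix.diagonal_apply, Matrix.one_apply, RCLike.ofReal_real_eq_id]
      have hexp : Q - c • 1 = (hQ.1.eigenvectorUnitary : Matrix (Fin n) (Fin n) ℝ) *
          diagonal (fun i => lam i - c) *
          star (hQ.1.eigenvectorUnitary : Matrix (Fin n) (Fin n) ℝ) := by
        rw [hdiag, Matrix.mul_sub, Matrix.sub_mul, Matrix.mul_smul, Matrix.mul_one,
          Matrix.smul_mul, hU]
        conv_lhs => rw [hQ.1.spectral_theorem]
        rfl
      rw [hexp, Matrix.star_eq_conjTranspose]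
      exact (Matrix.PosSemidef.diagonal (fun i => by
        simp only [Pi.zero_apply, sub_nonneg]
        exact Finset.inf'_le _ (Finset.mem_univ i))).mul_mul_conjTranspose_same _
    have hPt : (t • (1 : Matrix (Fin n) (Fin n) ℝ) - P).PosSemidef :=
      trace_smul_one_sub_psd hP.posSemidef
    refine ⟨min (c / t) 1, lt_min (div_pos hc ht) one_pos, min_le_right _ _, ?_⟩
    have hkey : Q - (min (c / t) 1) • P =
        (Q - c • 1) + ((c / t) • (t • (1 : Matrix (Fin n) (Fin n) ℝ) - P)
          + (c / t - min (c / t) 1) • P) := by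
      have h1 : (c / t) • (t • (1 : Matrix (Fin n) (Fin n) ℝ)) = c • 1 := by
        rw [smul_smul, div_mul_cancel₀ _ ht.ne']
      rw [smul_sub, h1, sub_smul]
      abel
    rw [hkey]
    exact hQc.add ((psd_smul_nonneg hPt (by positivity)).add
      (psd_smul_nonneg hP.posSemidef (sub_nonneg.mpr (min_le_left _ _))))


theorem stmt2 {n m : ℕ} (A C : Matrix (Fin n) (Fin n) ℝ)
    (B D : Matrix (Fin n) (Fin m) ℝ) (L : Matrix (Fin m) (Fin n) ℝ)
    (Q : Matrix (Fin n) (Fin n) ℝ) (R : Matrix (Fin m) (Fin m) ℝ)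
    (W : Matrix (Fin n) (Fin n) ℝ) (γ : ℝ)
    (hQ : Q.PosDef) (hR : R.PosDef) (hW : W.PosSemidef)
    (hγ0 : 0 ≤ γ) (hγ1 : γ < 1)
    (hstab : specRad ((A + B * L) ⊗ₖ (A + B * L) + (C + D * L) ⊗ₖ (C + D * L)) < 1)
    (P : Matrix (Fin n) (Fin n) ℝ) (hP : P.PosDef)
    (hlyap : P = γ • ((A + B * L)ᵀ * P * (A + B * L)) +
      γ • ((C + D * L)ᵀ * P * (C + D * L)) + Lᵀ * R * L + Q)
    (m0 : Matrix (Fin n) (Fin n) ℝ) (hm0 : m0.PosSemidef) :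
    HasSum (fun k => γ ^ k * ((Q + Lᵀ * R * L) * momSeq (A + B * L) (C + D * L) W m0 k).trace)
      ((P * m0).trace + (γ / (1 - γ)) * (P * W).trace) := by
  classical
  obtain ⟨ε, hε0, hε1, hεP⟩ := exists_eps hP hQ
  set Acl := A + B * L with hAcl
  set Ccl := C + D * L with hCcl
  set G := Q + Lᵀ * R * L with hG
  set M : ℕ → Matrix (Fin n) (Fin n) ℝ := momSeq Acl Ccl W m0 with hM
  set a : ℕ → ℝ := fun k => γ ^ k * (P * M k).trace with ha
  set cW := (P * W).trace with hcW
  have hLRL : (Lᵀ * R * L).PosSemidef := by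
    have h := hR.posSemidef.conjTranspose_mul_mul_same L
    rwa [Matrix.conjTranspose_eq_transpose_of_trivial] at h
  have hMpsd : ∀ k, (M k).PosSemidef := by
    intro k
    induction k with
    | zero => exact hm0
    | succ k ih =>
      show (Acl * M k * Aclᵀ + Ccl * M k * Cclᵀ + W).PosSemidef
      have h1 := ih.mul_mul_conjTranspose_same Acl
      have h2 := ih.mul_mul_conjTranspose_same Ccl
      rw [Matrix.conjTranspose_eq_transpose_of_trivial] at h1 h2
      exact (h1.add h2).add hW
  have hGpsd : G.PosSemidef := hQ.posSemidef.add hLRL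
  have hPG : P - G = γ • (Aclᵀ * P * Acl) + γ • (Cclᵀ * P * Ccl) := by
    rw [sub_eq_iff_eq_add]
    conv_lhs => rw [hlyap]
    rw [hG]
    abel
  have cyc : ∀ (X Y : Matrix (Fin n) (Fin n) ℝ),
      (P * (X * Y * Xᵀ)).trace = (Xᵀ * P * X * Y).trace := by
    intro X Y
    calc (P * (X * Y * Xᵀ)).trace = ((P * (X * Y)) * Xᵀ).trace := by
          simp only [Matrix.mul_assoc]
      _ = (Xᵀ * (P * (X * Y))).trace := Matrix.trace_mul_comm _ _
      _ = (Xᵀ * P * X * Y).trace := by simp only [Matrix.mul_assoc]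
  have h1 : ∀ k, (P * M (k+1)).trace =
      ((Aclᵀ * P * Acl) * M k).trace + ((Cclᵀ * P * Ccl) * M k).trace + cW := by
    intro k
    show (P * (Acl * M k * Aclᵀ + Ccl * M k * Cclᵀ + W)).trace = _
    rw [Matrix.mul_add, Matrix.mul_add, Matrix.trace_add, Matrix.trace_add,
      cyc Acl (M k), cyc Ccl (M k)]
  have hPGtr : ∀ k, ((P - G) * M k).trace = γ * (P * M (k+1)).trace - γ * cW := by
    intro k
    rw [hPG, Matrix.add_mul, Matrix.smul_mul, Matrix.smul_mul, Matrix.trace_add,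
      Matrix.trace_smul, Matrix.trace_smul, h1 k]
    simp only [smul_eq_mul]
    ring
  have hterm : ∀ k, γ ^ k * (G * M k).trace = a k - a (k+1) + γ ^ (k+1) * cW := by
    intro k
    have h2 : (G * M k).trace = (P * M k).trace - ((P - G) * M k).trace := by
      rw [Matrix.sub_mul, Matrix.trace_sub]; ring
    rw [h2, hPGtr k]
    simp only [ha]
    rw [pow_succ]
    ring
  have haNN : ∀ k, 0 ≤ a k := fun k =>
    mul_nonneg (pow_nonneg hγ0 k) (trace_mul_psd_nonneg hP.posSemidef (hMpsd k))
  have hcWnn : 0 ≤ cW := trace_mul_psd_nonneg hP.posSemidef hW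
  have hfnn : ∀ k, 0 ≤ γ ^ k * (G * M k).trace := fun k =>
    mul_nonneg (pow_nonneg hγ0 k) (trace_mul_psd_nonneg hGpsd (hMpsd k))
  set δ := 1 - ε with hδ
  have hδ0 : 0 ≤ δ := by rw [hδ]; linarith
  have hδ1 : δ < 1 := by rw [hδ]; linarith
  have hGεP : (δ • P - (P - G)).PosSemidef := by
    have hkey : δ • P - (P - G) = (Q - ε • P) + Lᵀ * R * L := by
      rw [hδ, sub_smul, one_smul, hG]
      abel
    rw [hkey]
    exact hεP.add hLRL
  have hdecay : ∀ k, a (k+1) ≤ δ * a k + γ ^ (k+1) * cW := by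
    intro k
    have hle : ((P - G) * M k).trace ≤ δ * (P * M k).trace := by
      have h := trace_mul_mono (hMpsd k) hGεP
      rwa [Matrix.smul_mul, Matrix.trace_smul, smul_eq_mul] at h
    have heq := hPGtr k
    simp only [ha]
    rw [pow_succ]
    calc γ ^ k * γ * (P * M (k+1)).trace
        = γ ^ k * (γ * (P * M (k+1)).trace - γ * cW) + γ ^ k * γ * cW := by ring
      _ = γ ^ k * ((P - G) * M k).trace + γ ^ k * γ * cW := by rw [← heq]
      _ ≤ γ ^ k * (δ * (P * M k).trace) + γ ^ k * γ * cW := by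
          have := mul_le_mul_of_nonneg_left hle (pow_nonneg hγ0 k)
          linarith
      _ = δ * (γ ^ k * (P * M k).trace) + γ ^ k * γ * cW := by ring
  set r := max δ γ with hr
  have hr0 : 0 ≤ r := le_trans hδ0 (le_max_left _ _)
  have hr1 : r < 1 := max_lt hδ1 hγ1
  have hbound : ∀ N, a N ≤ r ^ N * (a 0 + N * cW) := by
    intro N
    induction N with
    | zero => simp
    | succ N ih =>
      have h4 : δ * a N ≤ r * (r ^ N * (a 0 + N * cW)) :=
        le_trans (mul_le_mul_of_nonneg_right (le_max_left _ _) (haNN N))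
          (mul_le_mul_of_nonneg_left ih hr0)
      have h6 : γ ^ (N+1) ≤ r ^ (N+1) := pow_le_pow_left₀ hγ0 (le_max_right _ _) _
      calc a (N+1) ≤ δ * a N + γ ^ (N+1) * cW := hdecay N
        _ ≤ r * (r ^ N * (a 0 + N * cW)) + r ^ (N+1) * cW :=
            add_le_add h4 (mul_le_mul_of_nonneg_right h6 hcWnn)
        _ = r ^ (N+1) * (a 0 + (N+1 : ℕ) * cW) := by rw [pow_succ]; push_cast; ring
  have htend0 : Tendsto (fun N : ℕ => r ^ N * (a 0 + N * cW)) atTop (𝓝 0) := by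
    have hgeo : Tendsto (fun N : ℕ => a 0 * r ^ N) atTop (𝓝 0) := by
      simpa using (tendsto_pow_atTop_nhds_zero_of_lt_one hr0 hr1).const_mul (a 0)
    have hnr : Tendsto (fun N : ℕ => cW * ((N : ℝ) * r ^ N)) atTop (𝓝 0) := by
      have h := tendsto_pow_const_mul_const_pow_of_abs_lt_one 1
        (abs_lt.mpr ⟨by linarith, hr1⟩)
      simpa using h.const_mul cW
    have h := hgeo.add hnr
    rw [add_zero] at h
    exact h.congr fun N => by ring
  have haT : Tendsto a atTop (𝓝 0) := squeeze_zero haNN hbound htend0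
  have hsum : ∀ N, ∑ k ∈ Finset.range N, γ ^ k * (G * M k).trace
      = a 0 - a N + (∑ k ∈ Finset.range N, γ ^ (k+1)) * cW := by
    intro N
    calc ∑ k ∈ Finset.range N, γ ^ k * (G * M k).trace
        = ∑ k ∈ Finset.range N, ((a k - a (k+1)) + γ ^ (k+1) * cW) :=
          Finset.sum_congr rfl fun k _ => hterm k
      _ = a 0 - a N + (∑ k ∈ Finset.range N, γ ^ (k+1)) * cW := by
          rw [Finset.sum_add_distrib, Finset.sum_range_sub' a N, ← Finset.sum_mul]
  have hgeoT : Tendsto (fun N : ℕ => ∑ k ∈ Finset.range N, γ ^ (k+1)) atTop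
      (𝓝 (γ / (1 - γ))) := by
    have h := ((hasSum_geometric_of_lt_one hγ0 hγ1).mul_left γ).tendsto_sum_nat
    rw [div_eq_mul_inv]
    exact h.congr fun N => Finset.sum_congr rfl fun k _ => by rw [pow_succ]; ring
  have hfinal : Tendsto (fun N : ℕ => a 0 - a N + (∑ k ∈ Finset.range N, γ ^ (k+1)) * cW)
      atTop (𝓝 ((P * m0).trace + γ / (1 - γ) * cW)) := by
    have h : Tendsto (fun N : ℕ => a 0 - a N + (∑ k ∈ Finset.range N, γ ^ (k+1)) * cW)
        atTop (𝓝 (a 0 - 0 + γ / (1 - γ) * cW)) :=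
      (tendsto_const_nhds.sub haT).add (hgeoT.mul tendsto_const_nhds)
    have hv : a 0 - 0 + γ / (1 - γ) * cW = (P * m0).trace + γ / (1 - γ) * cW := by
      simp only [ha, pow_zero, one_mul, sub_zero]
      congr 2
    rw [hv] at h
    exact h
  rw [hasSum_iff_tendsto_nat_of_nonneg hfnn]
  exact hfinal.congr fun N => (hsum N).symm
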